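/- In the tight bonded braid monoid BB_n (n ≥ 3), for every 2 ≤ i ≤ n−1, the elementary bond b_i satisfies b_i = (σ_i σ_{i−1})⁻¹ (σ_{i−1} σ_{i−2})⁻¹ ⋯ (σ_2 σ_1)⁻¹ b_1 (σ_2 σ_1) (σ_3 σ_2) ⋯ (σ_i σ_{i−1}), where (σ_k σ_{k−1})⁻¹ denotes the word σ_{k−1}⁻ σ_k⁻. (Claim proved in Section 6.3: every elementary bond is a conjugate of b_1 by an explicit braid word.) -/
import Mathlib


/-- Generators of the tight bonded braid monoid `BB n`: index `i : Fin (n-1)` (0-based)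
corresponds to the generator with 1-based label `i+1`. -/
inductive BBGen (n : ℕ) : Type
  | sigma    : Fin (n - 1) → BBGen n
  | sigmaInv : Fin (n - 1) → BBGen n
  | bond     : Fin (n - 1) → BBGen n

open FreeMonoid in
/-- The defining relations of the tight bonded braid monoid. -/
inductive BBRel (n : ℕ) : FreeMonoid (BBGen n) → FreeMonoid (BBGen n) → Prop
  | inv_right (i : Fin (n-1)) :
      BBRel n (of (.sigma i) * of (.sigmaInv i)) 1
  | inv_left (i : Fin (n-1)) :
      BBRel n (of (.sigmaInv i) * of (.sigma i)) 1
  | sigma_comm (i j : Fin (n-1)) (h : 1 < Nat.dist i.val j.val) :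
      BBRel n (of (.sigma i) * of (.sigma j)) (of (.sigma j) * of (.sigma i))
  | braid (i j : Fin (n-1)) (h : j.val = i.val + 1) :
      BBRel n (of (.sigma i) * of (.sigma j) * of (.sigma i))
              (of (.sigma j) * of (.sigma i) * of (.sigma j))
  | bond_comm (i j : Fin (n-1)) (h : 1 < Nat.dist i.val j.val) :
      BBRel n (of (.bond i) * of (.bond j)) (of (.bond j) * of (.bond i))
  | bond_sigma_far (i j : Fin (n-1)) (h : 1 < Nat.dist i.val j.val) :
      BBRel n (of (.bond i) * of (.sigma j)) (of (.sigma j) * of (.bond i))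
  | bond_sigmaInv_far (i j : Fin (n-1)) (h : 1 < Nat.dist i.val j.val) :
      BBRel n (of (.bond i) * of (.sigmaInv j)) (of (.sigmaInv j) * of (.bond i))
  | bond_sigma_self (i : Fin (n-1)) :
      BBRel n (of (.bond i) * of (.sigma i)) (of (.sigma i) * of (.bond i))
  | bond_sigmaInv_self (i : Fin (n-1)) :
      BBRel n (of (.bond i) * of (.sigmaInv i)) (of (.sigmaInv i) * of (.bond i))
  | bond_slide (i j : Fin (n-1)) (h : j.val = i.val + 1) :
      BBRel n (of (.bond i) * of (.sigma j) * of (.sigma i))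
              (of (.sigma j) * of (.sigma i) * of (.bond j))
  | bond_slide' (i j : Fin (n-1)) (h : j.val = i.val + 1) :
      BBRel n (of (.sigma i) * of (.sigma j) * of (.bond i))
              (of (.bond j) * of (.sigma i) * of (.sigma j))

/-- The tight bonded braid monoid on `n` strands. -/
def BB (n : ℕ) : Type := PresentedMonoid (BBRel n)

instance (n : ℕ) : Monoid (BB n) := inferInstanceAs (Monoid (PresentedMonoid (BBRel n)))

namespace BB
/-- The braid generator `σ_{i+1}` of `BB n`. -/
def sigma {n : ℕ} (i : Fin (n-1)) : BB n := PresentedMonoid.of (BBRel n) (.sigma i)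
/-- The formal inverse `σ_{i+1}⁻` of `BB n`. -/
def sigmaInv {n : ℕ} (i : Fin (n-1)) : BB n := PresentedMonoid.of (BBRel n) (.sigmaInv i)
/-- The elementary bond `b_{i+1}` of `BB n`. -/
def bond {n : ℕ} (i : Fin (n-1)) : BB n := PresentedMonoid.of (BBRel n) (.bond i)
end BB

namespace BB

/-- `σ` with a (0-based) natural-number index; junk value `1` out of range. -/
def sig (n k : ℕ) : BB n := if h : k < n - 1 then sigma ⟨k, h⟩ else 1

/-- `σ⁻` with a (0-based) natural-number index; junk value `1` out of range. -/
def sigInv (n k : ℕ) : BB n := if h : k < n - 1 then sigmaInv ⟨k, h⟩ else 1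

/-- elementary bond with a (0-based) natural-number index; junk value `1` out of range. -/
def bnd (n k : ℕ) : BB n := if h : k < n - 1 then bond ⟨k, h⟩ else 1

/-- `leftW n m = (σ_{m+1} σ_m)⁻¹ ⋯ (σ₂ σ₁)⁻¹` (1-based labels), where `(σ_k σ_{k-1})⁻¹`
denotes the word `σ_{k-1}⁻ σ_k⁻`. -/
def leftW (n : ℕ) : ℕ → BB n
  | 0     => 1
  | m + 1 => (sigInv n m * sigInv n (m+1)) * leftW n m

/-- `rightW n m = (σ₂ σ₁)(σ₃ σ₂) ⋯ (σ_{m+1} σ_m)` (1-based labels). -/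
def rightW (n : ℕ) : ℕ → BB n
  | 0     => 1
  | m + 1 => rightW n m * (sig n (m+1) * sig n m)

end BB

namespace BB

private lemma rel_eq {n : ℕ} {a b : FreeMonoid (BBGen n)} (h : BBRel n a b) :
    PresentedMonoid.mk (BBRel n) a = PresentedMonoid.mk (BBRel n) b :=
  Quotient.sound (ConGen.Rel.of a b h)

private lemma inv_left {n : ℕ} (i : Fin (n-1)) : sigmaInv i * sigma i = 1 :=
  rel_eq (BBRel.inv_left i)

private lemma slide {n : ℕ} (i j : Fin (n-1)) (h : j.val = i.val + 1) :
    bond i * sigma j * sigma i = sigma j * sigma i * bond j :=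
  rel_eq (BBRel.bond_slide i j h)

private lemma bnd_step {n : ℕ} (m : ℕ) (h : m + 1 < n - 1) :
    bnd n (m+1) = (sigInv n m * sigInv n (m+1)) * bnd n m * (sig n (m+1) * sig n m) := by
  have hm : m < n - 1 := Nat.lt_of_succ_lt h
  simp only [bnd, sig, sigInv, dif_pos h, dif_pos hm]
  have hs := slide ⟨m, hm⟩ ⟨m+1, h⟩ rfl
  calc bond ⟨m+1, h⟩
      = (sigmaInv ⟨m, hm⟩ * (sigmaInv ⟨m+1, h⟩ * sigma ⟨m+1, h⟩) * sigma ⟨m, hm⟩) *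
        bond ⟨m+1, h⟩ := by rw [inv_left]; simp [inv_left]
    _ = sigmaInv ⟨m, hm⟩ * sigmaInv ⟨m+1, h⟩ *
        (sigma ⟨m+1, h⟩ * sigma ⟨m, hm⟩ * bond ⟨m+1, h⟩) := by
        simp only [mul_assoc]
    _ = sigmaInv ⟨m, hm⟩ * sigmaInv ⟨m+1, h⟩ *
        (bond ⟨m, hm⟩ * sigma ⟨m+1, h⟩ * sigma ⟨m, hm⟩) := by rw [← hs]
    _ = sigmaInv ⟨m, hm⟩ * sigmaInv ⟨m+1, h⟩ * bond ⟨m, hm⟩ *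
        (sigma ⟨m+1, h⟩ * sigma ⟨m, hm⟩) := by simp only [mul_assoc]

private lemma bnd_conj {n : ℕ} (m : ℕ) (h : m < n - 1) :
    bnd n m = leftW n m * bnd n 0 * rightW n m := by
  induction m with
  | zero => simp [leftW, rightW]
  | succ k ih =>
    rw [bnd_step k h, ih (Nat.lt_of_succ_lt h), leftW, rightW]
    simp only [mul_assoc]

end BB

/-- **Section 6.3.**  In the tight bonded braid monoid `BB n` (`n ≥ 3`), every elementary bond
`b_i` with `2 ≤ i ≤ n-1` (1-based label `i = i₀+1`, i.e. `1 ≤ i₀`) satisfies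
`b_i = (σ_i σ_{i-1})⁻¹ (σ_{i-1} σ_{i-2})⁻¹ ⋯ (σ₂ σ₁)⁻¹ b_1 (σ₂ σ₁)(σ₃ σ₂) ⋯ (σ_i σ_{i-1})`,
where `(σ_k σ_{k-1})⁻¹` denotes the word `σ_{k-1}⁻ σ_k⁻`. -/
theorem bond_eq_conjugate_of_b1 (n : ℕ) (hn : 3 ≤ n) (i : Fin (n-1)) (hi : 1 ≤ i.val) :
    BB.bond i = BB.leftW n i.val * BB.bnd n 0 * BB.rightW n i.val := by
  have h := BB.bnd_conj i.val i.isLt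
  rwa [show BB.bnd n i.val = BB.bond i by simp [BB.bnd, i.isLt]] at h
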